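/- arXiv:1804.06097 — 2 statements merged into one kernel-verified Lean document; each statement's English description precedes it below -/
import Mathlib

section
/- Let q ∈ (1,∞), let q' := q/(q−1), and let κ ≥ 0. There is a constant c > 0 depending only on q such that for all a ≥ 0, λ ≥ 0 and t ≥ 0: ρ_a(λ t) ≤ c · max{λ^q, λ²} · ρ_a(t), and (ρ_a)*(λ t) ≤ c · max{λ^{q'}, λ²} · (ρ_a)*(t). -/
/-- The shifted `N`-function `ρ_a(t) = ∫₀ᵗ (κ+a+τ)^{q−2} τ dτ` associated with
`ρ(t) = ∫₀ᵗ (κ+s)^{q−2} s ds`. -/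
noncomputable def rhoShift (κ q a t : ℝ) : ℝ :=
  ∫ τ in (0:ℝ)..t, (κ + a + τ) ^ (q - 2) * τ

/-- The convex conjugate `(ρ_a)*(t) = sup_{s ≥ 0} (s t − ρ_a(s))`. -/
noncomputable def rhoShiftConj (κ q a t : ℝ) : ℝ :=
  sSup {v : ℝ | ∃ s : ℝ, 0 ≤ s ∧ v = s * t - rhoShift κ q a s}

open Set intervalIntegral

noncomputable def rho0 (q b t : ℝ) : ℝ := ∫ τ in (0:ℝ)..t, (b + τ) ^ (q - 2) * τ

lemma rhoShift_eq (κ q a t : ℝ) : rhoShift κ q a t = rho0 q (κ + a) t := rfl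

lemma rhoShiftConj_eq (κ q a t : ℝ) :
    rhoShiftConj κ q a t = sSup {v : ℝ | ∃ s : ℝ, 0 ≤ s ∧ v = s * t - rho0 q (κ + a) s} := rfl

section aux
variable {q b : ℝ}

lemma aux_contOn (hq : 1 < q) (hb : 0 ≤ b) :
    ContinuousOn (fun τ : ℝ => (b + τ) ^ (q - 2) * τ) (Set.Ici 0) := by
  rcases hb.lt_or_eq with hb' | hb'
  · refine ContinuousOn.mul (fun x hx => ?_) continuousOn_id
    have hx0 : (0:ℝ) ≤ x := hx
    exact ((continuous_const.add continuous_id).continuousAt.rpow_const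
      (Or.inl (by show b + x ≠ 0; positivity))).continuousWithinAt
  · have heq : Set.EqOn (fun τ : ℝ => (b + τ) ^ (q - 2) * τ)
        (fun τ : ℝ => τ ^ (q - 1)) (Set.Ici 0) := by
      intro τ hτ
      have hτ0 : (0:ℝ) ≤ τ := hτ
      simp only [← hb', zero_add]
      rcases eq_or_lt_of_le hτ0 with h0 | h0
      · rw [← h0, mul_zero, Real.zero_rpow (by intro h; linarith [h] : q - 1 ≠ 0)]
      · rw [← Real.rpow_add_one (ne_of_gt h0)]
        ring_nf
    exact ((Real.continuous_rpow_const (by linarith)).continuousOn).congr heq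

lemma aux_intble (hq : 1 < q) (hb : 0 ≤ b) {t : ℝ} (ht : 0 ≤ t) :
    IntervalIntegrable (fun τ : ℝ => (b + τ) ^ (q - 2) * τ) MeasureTheory.volume 0 t := by
  apply ContinuousOn.intervalIntegrable
  rw [Set.uIcc_of_le ht]
  exact (aux_contOn hq hb).mono Set.Icc_subset_Ici_self

lemma rho0_nonneg (hq : 1 < q) (hb : 0 ≤ b) {t : ℝ} (ht : 0 ≤ t) : 0 ≤ rho0 q b t := by
  apply intervalIntegral.integral_nonneg ht
  intro u hu
  exact mul_nonneg (Real.rpow_nonneg (by linarith [hu.1]) _) hu.1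

lemma rho0_zero : rho0 q b 0 = 0 := intervalIntegral.integral_same

lemma aux_pointwise (hq : 1 < q) (hb : 0 ≤ b) {lam s : ℝ} (hlam : 0 < lam) (hs : 0 ≤ s) :
    lam * ((b + lam * s) ^ (q - 2) * (lam * s)) ≤
      max (lam ^ q) (lam ^ (2:ℝ)) * ((b + s) ^ (q - 2) * s) := by
  rcases eq_or_lt_of_le hs with h0 | h0
  · simp [← h0]
  have hbs : 0 < b + s := by linarith
  have hbls : 0 < b + lam * s := by nlinarith
  have hlq : lam ^ (2:ℝ) * lam ^ (q - 2) = lam ^ q := by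
    rw [← Real.rpow_add hlam]; norm_num
  obtain ⟨C, hC0, hpow, hco⟩ : ∃ C : ℝ, 0 ≤ C ∧ (b + lam * s) ^ (q - 2) ≤ C * (b + s) ^ (q - 2) ∧
      lam ^ (2:ℝ) * C ≤ max (lam ^ q) (lam ^ (2:ℝ)) := by
    rcases le_or_gt 1 lam with hl | hl <;> rcases le_or_gt 2 q with hq2 | hq2
    · refine ⟨lam ^ (q - 2), Real.rpow_nonneg hlam.le _, ?_, ?_⟩
      · have h1 : (b + lam * s) ^ (q - 2) ≤ (lam * (b + s)) ^ (q - 2) :=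
          Real.rpow_le_rpow hbls.le (by nlinarith) (by linarith)
        rwa [Real.mul_rpow hlam.le hbs.le] at h1
      · rw [hlq]; exact le_max_left _ _
    · refine ⟨1, zero_le_one, ?_, ?_⟩
      · rw [one_mul]
        exact Real.rpow_le_rpow_of_nonpos hbs (by nlinarith) (by linarith)
      · rw [mul_one]; exact le_max_right _ _
    · refine ⟨1, zero_le_one, ?_, ?_⟩
      · rw [one_mul]
        exact Real.rpow_le_rpow hbls.le (by nlinarith) (by linarith)
      · rw [mul_one]; exact le_max_right _ _
    · refine ⟨lam ^ (q - 2), Real.rpow_nonneg hlam.le _, ?_, ?_⟩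
      · have h1 : (b + lam * s) ^ (q - 2) ≤ (lam * (b + s)) ^ (q - 2) :=
          Real.rpow_le_rpow_of_nonpos (by positivity) (by nlinarith) (by linarith)
        rwa [Real.mul_rpow hlam.le hbs.le] at h1
      · rw [hlq]; exact le_max_left _ _
  have key : lam ^ (2:ℝ) * (b + lam * s) ^ (q - 2) ≤
      max (lam ^ q) (lam ^ (2:ℝ)) * (b + s) ^ (q - 2) := by
    calc lam ^ (2:ℝ) * (b + lam * s) ^ (q - 2)
        ≤ lam ^ (2:ℝ) * (C * (b + s) ^ (q - 2)) :=
          mul_le_mul_of_nonneg_left hpow (Real.rpow_nonneg hlam.le _)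
      _ = (lam ^ (2:ℝ) * C) * (b + s) ^ (q - 2) := by ring
      _ ≤ max (lam ^ q) (lam ^ (2:ℝ)) * (b + s) ^ (q - 2) :=
          mul_le_mul_of_nonneg_right hco (Real.rpow_nonneg hbs.le _)
  calc lam * ((b + lam * s) ^ (q - 2) * (lam * s))
      = (lam ^ (2:ℝ) * (b + lam * s) ^ (q - 2)) * s := by rw [Real.rpow_two]; ring
    _ ≤ (max (lam ^ q) (lam ^ (2:ℝ)) * (b + s) ^ (q - 2)) * s :=
        mul_le_mul_of_nonneg_right key hs
    _ = max (lam ^ q) (lam ^ (2:ℝ)) * ((b + s) ^ (q - 2) * s) := by ring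

lemma rho0_scale (hq : 1 < q) (hb : 0 ≤ b) {lam t : ℝ} (hlam : 0 ≤ lam) (ht : 0 ≤ t) :
    rho0 q b (lam * t) ≤ max (lam ^ q) (lam ^ (2:ℝ)) * rho0 q b t := by
  rcases eq_or_lt_of_le hlam with h0 | h0
  · rw [← h0, zero_mul, rho0_zero, Real.zero_rpow (by positivity : q ≠ 0),
      Real.zero_rpow (by norm_num : (2:ℝ) ≠ 0), max_self, zero_mul]
  have h1 : rho0 q b (lam * t) =
      ∫ s in (0:ℝ)..t, lam * ((b + lam * s) ^ (q - 2) * (lam * s)) := by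
    rw [rho0]
    calc (∫ τ in (0:ℝ)..(lam * t), (b + τ) ^ (q - 2) * τ)
        = ∫ τ in (lam * 0)..(lam * t), (b + τ) ^ (q - 2) * τ := by norm_num
      _ = lam • ∫ s in (0:ℝ)..t, (b + lam * s) ^ (q - 2) * (lam * s) :=
          (intervalIntegral.smul_integral_comp_mul_left
            (fun τ : ℝ => (b + τ) ^ (q - 2) * τ) lam).symm
      _ = ∫ s in (0:ℝ)..t, lam * ((b + lam * s) ^ (q - 2) * (lam * s)) := by
          rw [intervalIntegral.integral_const_mul, smul_eq_mul]
  have h2 : max (lam ^ q) (lam ^ (2:ℝ)) * rho0 q b t =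
      ∫ s in (0:ℝ)..t, max (lam ^ q) (lam ^ (2:ℝ)) * ((b + s) ^ (q - 2) * s) := by
    rw [rho0, intervalIntegral.integral_const_mul]
  rw [h1, h2]
  apply intervalIntegral.integral_mono_on ht
  · apply ContinuousOn.intervalIntegrable
    rw [Set.uIcc_of_le ht]
    apply ContinuousOn.mul continuousOn_const
    exact (aux_contOn hq hb).comp ((continuous_const.mul continuous_id).continuousOn)
      (fun x hx => by exact mul_nonneg h0.le hx.1)
  · apply ContinuousOn.intervalIntegrable
    rw [Set.uIcc_of_le ht]
    exact continuousOn_const.mul ((aux_contOn hq hb).mono Set.Icc_subset_Ici_self)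
  · exact fun s hs => aux_pointwise hq hb h0 hs.1

lemma rho0_one_pos (hq : 1 < q) (hb : 0 ≤ b) : 0 < rho0 q b 1 := by
  apply intervalIntegral.intervalIntegral_pos_of_pos_on (aux_intble hq hb zero_le_one)
  · intro x hx
    have hx0 : 0 < x := hx.1
    positivity
  · norm_num

lemma rho0_lower (hq : 1 < q) (hb : 0 ≤ b) {s : ℝ} (hs : 1 ≤ s) :
    s ^ (min q 2) * rho0 q b 1 ≤ rho0 q b s := by
  set p := min q 2 with hp
  have hs0 : 0 < s := lt_of_lt_of_le one_pos hs
  have h := rho0_scale hq hb (inv_nonneg.mpr hs0.le) hs0.le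
  rw [inv_mul_cancel₀ hs0.ne'] at h
  have hmax : max (s⁻¹ ^ q) (s⁻¹ ^ (2:ℝ)) ≤ (s ^ p)⁻¹ := by
    rw [← Real.inv_rpow hs0.le]
    have hinv0 : 0 < s⁻¹ := inv_pos.mpr hs0
    have hinv1 : s⁻¹ ≤ 1 := inv_le_one_of_one_le₀ hs
    exact max_le (Real.rpow_le_rpow_of_exponent_ge hinv0 hinv1 (min_le_left _ _))
      (Real.rpow_le_rpow_of_exponent_ge hinv0 hinv1 (min_le_right _ _))
  have hρs : 0 ≤ rho0 q b s := rho0_nonneg hq hb hs0.le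
  have hsp : 0 < s ^ p := Real.rpow_pos_of_pos hs0 _
  calc s ^ p * rho0 q b 1
      ≤ s ^ p * (max (s⁻¹ ^ q) (s⁻¹ ^ (2:ℝ)) * rho0 q b s) :=
        mul_le_mul_of_nonneg_left h hsp.le
    _ ≤ s ^ p * ((s ^ p)⁻¹ * rho0 q b s) :=
        mul_le_mul_of_nonneg_left (mul_le_mul_of_nonneg_right hmax hρs) hsp.le
    _ = rho0 q b s := by rw [← mul_assoc, mul_inv_cancel₀ hsp.ne', one_mul]

lemma S_zero (hq : 1 < q) (t : ℝ) :
    (0:ℝ) ∈ {v : ℝ | ∃ s : ℝ, 0 ≤ s ∧ v = s * t - rho0 q b s} :=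
  ⟨0, le_refl 0, by rw [rho0_zero, zero_mul, sub_zero]⟩

lemma S_bdd (hq : 1 < q) (hb : 0 ≤ b) {t : ℝ} (ht : 0 ≤ t) :
    BddAbove {v : ℝ | ∃ s : ℝ, 0 ≤ s ∧ v = s * t - rho0 q b s} := by
  set p := min q 2 with hp
  have hp1 : 1 < p := lt_min hq one_lt_two
  have hρ1 : 0 < rho0 q b 1 := rho0_one_pos hq hb
  set X := ((t + 1) / rho0 q b 1) ^ (p - 1)⁻¹ with hX
  set K := max 1 X with hK
  have hK1 : (1:ℝ) ≤ K := le_max_left _ _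
  refine ⟨K * t, fun v hv => ?_⟩
  obtain ⟨s, hs, rfl⟩ := hv
  have hKt : 0 ≤ K * t := mul_nonneg (by linarith) ht
  rcases le_or_gt s K with hsK | hsK
  · have h1 : s * t ≤ K * t := mul_le_mul_of_nonneg_right hsK ht
    have h0 : 0 ≤ rho0 q b s := rho0_nonneg hq hb hs
    linarith
  · have hs1 : 1 ≤ s := le_trans hK1 hsK.le
    have hs0 : 0 < s := by linarith
    have hlow := rho0_lower hq hb hs1
    have e1 : s ^ ((p - 1) + 1) = s ^ (p - 1) * s := Real.rpow_add_one hs0.ne' _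
    rw [show (p - 1) + 1 = p by ring] at e1
    have e2 : X ^ (p - 1) = (t + 1) / rho0 q b 1 := by
      rw [hX, ← Real.rpow_mul (by positivity), inv_mul_cancel₀ (by linarith : p - 1 ≠ 0),
        Real.rpow_one]
    have e3 : (t + 1) / rho0 q b 1 ≤ s ^ (p - 1) := by
      rw [← e2]
      exact Real.rpow_le_rpow (by positivity) (le_trans (le_max_right 1 X) hsK.le)
        (by linarith)
    have h4 : s * (t + 1) ≤ rho0 q b s := by
      have h5 : s * ((t + 1) / rho0 q b 1) * rho0 q b 1 ≤ s ^ p * rho0 q b 1 := by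
        apply mul_le_mul_of_nonneg_right _ hρ1.le
        rw [e1]
        calc s * ((t + 1) / rho0 q b 1) ≤ s * s ^ (p - 1) :=
              mul_le_mul_of_nonneg_left e3 hs0.le
          _ = s ^ (p - 1) * s := mul_comm _ _
      rw [mul_assoc, div_mul_cancel₀ _ hρ1.ne'] at h5
      linarith
    nlinarith

lemma conj_scale (hq : 1 < q) (hb : 0 ≤ b) {lam t r : ℝ} (hlam : 0 < lam) (hr : 1 < r)
    (h₁ : 1 ≤ lam → r ≤ q ∧ r ≤ 2) (h₂ : lam < 1 → q ≤ r ∧ 2 ≤ r) (ht : 0 ≤ t) :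
    sSup {v : ℝ | ∃ s : ℝ, 0 ≤ s ∧ v = s * (lam * t) - rho0 q b s} ≤
      lam ^ (r / (r - 1)) * sSup {v : ℝ | ∃ s : ℝ, 0 ≤ s ∧ v = s * t - rho0 q b s} := by
  have hr0 : (0:ℝ) < r - 1 := by linarith
  set μ := lam ^ (r - 1)⁻¹ with hμ
  have hμpos : 0 < μ := Real.rpow_pos_of_pos hlam _
  set M := lam ^ (r / (r - 1)) with hM
  have hMpos : 0 < M := Real.rpow_pos_of_pos hlam _
  have hμlam : μ * lam = M := by
    rw [hM, show r / (r - 1) = (r - 1)⁻¹ + 1 by field_simp; ring, Real.rpow_add_one hlam.ne']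
  have key : ∀ e : ℝ, (1 ≤ lam → r ≤ e) → (lam < 1 → e ≤ r) → M ≤ μ ^ e := by
    intro e he1 he2
    have hμe : μ ^ e = lam ^ ((r - 1)⁻¹ * e) := by
      rw [hμ, ← Real.rpow_mul hlam.le]
    rw [hM, hμe, show r / (r - 1) = (r - 1)⁻¹ * r by rw [div_eq_inv_mul]]
    rcases le_or_gt 1 lam with h | h
    · exact Real.rpow_le_rpow_of_exponent_le h
        (mul_le_mul_of_nonneg_left (he1 h) (by positivity))
    · exact Real.rpow_le_rpow_of_exponent_ge hlam h.le
        (mul_le_mul_of_nonneg_left (he2 h) (by positivity))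
  have hq' : M ≤ μ ^ q := key q (fun h => (h₁ h).1) (fun h => (h₂ h).1)
  have h2' : M ≤ μ ^ (2:ℝ) := key 2 (fun h => (h₁ h).2) (fun h => (h₂ h).2)
  apply csSup_le ⟨0, S_zero hq _⟩
  rintro v ⟨s, hs, rfl⟩
  set u := s / μ with hu
  have hu0 : 0 ≤ u := div_nonneg hs hμpos.le
  have hsu : s = μ * u := by rw [hu]; field_simp [hμpos.ne']
  have hscale := rho0_scale hq hb (inv_nonneg.mpr hμpos.le) (mul_nonneg hμpos.le hu0)
  rw [show μ⁻¹ * (μ * u) = u by field_simp] at hscale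
  have hρnn : 0 ≤ rho0 q b (μ * u) := rho0_nonneg hq hb (mul_nonneg hμpos.le hu0)
  have hMmax : M * max (μ⁻¹ ^ q) (μ⁻¹ ^ (2:ℝ)) ≤ 1 := by
    have hmax : max (μ⁻¹ ^ q) (μ⁻¹ ^ (2:ℝ)) ≤ M⁻¹ := by
      apply max_le
      · rw [Real.inv_rpow hμpos.le]
        exact inv_anti₀ hMpos hq'
      · rw [Real.inv_rpow hμpos.le]
        exact inv_anti₀ hMpos h2'
    calc M * max (μ⁻¹ ^ q) (μ⁻¹ ^ (2:ℝ)) ≤ M * M⁻¹ :=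
          mul_le_mul_of_nonneg_left hmax hMpos.le
      _ = 1 := mul_inv_cancel₀ hMpos.ne'
  have hMρ : M * rho0 q b u ≤ rho0 q b s := by
    rw [hsu]
    calc M * rho0 q b u ≤ M * (max (μ⁻¹ ^ q) (μ⁻¹ ^ (2:ℝ)) * rho0 q b (μ * u)) :=
          mul_le_mul_of_nonneg_left hscale hMpos.le
      _ = (M * max (μ⁻¹ ^ q) (μ⁻¹ ^ (2:ℝ))) * rho0 q b (μ * u) := by ring
      _ ≤ 1 * rho0 q b (μ * u) := mul_le_mul_of_nonneg_right hMmax hρnn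
      _ = rho0 q b (μ * u) := one_mul _
  have harg : s * (lam * t) = M * (u * t) := by
    rw [hsu, ← hμlam]; ring
  calc s * (lam * t) - rho0 q b s ≤ M * (u * t) - M * rho0 q b u := by
        rw [harg]; linarith
    _ = M * (u * t - rho0 q b u) := by ring
    _ ≤ M * sSup {v : ℝ | ∃ s : ℝ, 0 ≤ s ∧ v = s * t - rho0 q b s} :=
        mul_le_mul_of_nonneg_left (le_csSup (S_bdd hq hb ht) ⟨u, hu0, rfl⟩) hMpos.le

end aux

/-- (Lemma `lem:shiftedindex`.)
Let `q ∈ (1,∞)`, `q' := q/(q−1)`, `κ ≥ 0`. There is `c > 0` depending only on `q` such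
that for all `a, λ, t ≥ 0`:
`ρ_a(λ t) ≤ c max{λ^q, λ²} ρ_a(t)` and `(ρ_a)*(λ t) ≤ c max{λ^{q'}, λ²} (ρ_a)*(t)`. -/
theorem stmt17 (q : ℝ) (hq : 1 < q) :
    ∃ c : ℝ, 0 < c ∧ ∀ κ : ℝ, 0 ≤ κ →
      ∀ a lam t : ℝ, 0 ≤ a → 0 ≤ lam → 0 ≤ t →
        rhoShift κ q a (lam * t) ≤
          c * max (lam ^ q) (lam ^ (2:ℝ)) * rhoShift κ q a t ∧
        rhoShiftConj κ q a (lam * t) ≤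
          c * max (lam ^ (q / (q - 1))) (lam ^ (2:ℝ)) * rhoShiftConj κ q a t := by
  refine ⟨1, one_pos, fun κ hκ a lam t ha hlam ht => ?_⟩
  have hb : 0 ≤ κ + a := by linarith
  constructor
  · rw [rhoShift_eq, rhoShift_eq, one_mul]
    exact rho0_scale hq hb hlam ht
  · rw [rhoShiftConj_eq, rhoShiftConj_eq, one_mul]
    rcases eq_or_lt_of_le hlam with h0 | h0
    · have hLHS : sSup {v : ℝ | ∃ s : ℝ, 0 ≤ s ∧ v = s * (lam * t) - rho0 q (κ + a) s} ≤ 0 := by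
        apply csSup_le ⟨0, S_zero hq _⟩
        rintro v ⟨s, hs, rfl⟩
        have := rho0_nonneg hq hb hs
        rw [← h0, zero_mul, mul_zero]
        linarith
      have hRHS : max (lam ^ (q / (q - 1))) (lam ^ (2:ℝ)) = 0 := by
        rw [← h0, Real.zero_rpow (ne_of_gt (by apply div_pos <;> linarith)),
          Real.zero_rpow (by norm_num : (2:ℝ) ≠ 0), max_self]
      rw [hRHS, zero_mul]
      exact hLHS
    · have hconj0 : 0 ≤ sSup {v : ℝ | ∃ s : ℝ, 0 ≤ s ∧ v = s * t - rho0 q (κ + a) s} :=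
        le_csSup (S_bdd hq hb ht) (S_zero hq _)
      rcases le_or_gt 1 lam with h1 | h1 <;> rcases le_or_gt q 2 with h2 | h2
      · refine le_trans (conj_scale hq hb h0 hq
          (fun _ => ⟨le_refl q, h2⟩) (fun h => absurd h (not_lt.mpr h1)) ht) ?_
        exact mul_le_mul_of_nonneg_right (le_max_left _ _) hconj0
      · have := conj_scale hq hb h0 one_lt_two
          (fun _ => ⟨h2.le, le_refl 2⟩) (fun h => absurd h (not_lt.mpr h1)) ht
        rw [show (2:ℝ) / (2 - 1) = 2 by norm_num] at this
        exact le_trans this (mul_le_mul_of_nonneg_right (le_max_right _ _) hconj0)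
      · have := conj_scale hq hb h0 one_lt_two
          (fun h => absurd h1 (not_lt.mpr h)) (fun _ => ⟨h2, le_refl 2⟩) ht
        rw [show (2:ℝ) / (2 - 1) = 2 by norm_num] at this
        exact le_trans this (mul_le_mul_of_nonneg_right (le_max_right _ _) hconj0)
      · refine le_trans (conj_scale hq hb h0 hq
          (fun h => absurd h1 (not_lt.mpr h)) (fun _ => ⟨le_refl q, h2.le⟩) ht) ?_
        exact mul_le_mul_of_nonneg_right (le_max_left _ _) hconj0
end

section
/- Let E ⊂ ℝⁿ be Lebesgue measurable with 0 < |E| < ∞, let κ ∈ [0,1], and let q : E → (1,∞) be measurable with 1 < q⁻ := ess inf q ≤ ess sup q =: q⁺ < ∞. Then there is a constant c > 0 depending only on q⁻ and q⁺ such that for every Q ∈ ℝ^{N×n}: |Q|^{q⁻} ≤ c ( |⨍_E (κ + |Q|)^{(q(x)−2)/2} Q dx|² + 1 ). -/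
open MeasureTheory Set

set_option maxHeartbeats 1000000

/-- (Estimate (fQ4): `|Q|^{q⁻}` is controlled by the averaged `F`.)
Let `E ⊂ ℝⁿ` be measurable with `0 < |E| < ∞`, `κ ∈ [0,1]`, and `q : E → (1,∞)`
measurable with `1 < q⁻ ≤ q⁺ < ∞`. Then there is `c > 0` depending only on `q⁻` and `q⁺`
such that for every matrix `Q`:
`|Q|^{q⁻} ≤ c (|⨍_E (κ + |Q|)^{(q(x)−2)/2} Q dx|² + 1)`. -/
theorem stmt19 (N n : ℕ) (qminus qplus : ℝ) (h1 : 1 < qminus) (h2 : qminus ≤ qplus) :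
    ∃ c : ℝ, 0 < c ∧
      ∀ E : Set (EuclideanSpace ℝ (Fin n)),
        MeasurableSet E → 0 < volume E → volume E < ⊤ →
        ∀ κ : ℝ, κ ∈ Icc (0:ℝ) 1 →
        ∀ q : EuclideanSpace ℝ (Fin n) → ℝ, Measurable q →
          (∀ᵐ x ∂(volume.restrict E), qminus ≤ q x ∧ q x ≤ qplus) →
        ∀ Q : EuclideanSpace ℝ (Fin N × Fin n),
          ‖Q‖ ^ qminus ≤
            c * (‖⨍ x in E, ((κ + ‖Q‖) ^ ((q x - 2) / 2)) • Q‖ ^ 2 + 1) := by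
  set e : ℝ := qminus - 2 with he
  set m : ℝ := min 1 ((2:ℝ) ^ e) with hm
  have hmpos : 0 < m := lt_min one_pos (Real.rpow_pos_of_pos two_pos e)
  refine ⟨max 1 m⁻¹, lt_of_lt_of_le one_pos (le_max_left _ _), ?_⟩
  intro E hE hE0 hEtop κ hκ q hq hqae Q
  have hc1 : (1:ℝ) ≤ max 1 m⁻¹ := le_max_left _ _
  have hX0 : (0:ℝ) ≤ ‖⨍ x in E, ((κ + ‖Q‖) ^ ((q x - 2) / 2)) • Q‖ ^ 2 :=
    sq_nonneg _
  by_cases hQ : ‖Q‖ < 1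
  · have h01 : ‖Q‖ ^ qminus ≤ 1 := Real.rpow_le_one (norm_nonneg Q) hQ.le (by linarith)
    nlinarith
  push_neg at hQ
  have hQ0 : (0:ℝ) < ‖Q‖ := lt_of_lt_of_le one_pos hQ
  set b : ℝ := κ + ‖Q‖ with hbdef
  have hb1 : (1:ℝ) ≤ b := by have := hκ.1; simp only [hbdef]; linarith
  have hb0 : (0:ℝ) < b := lt_of_lt_of_le one_pos hb1
  have hbQ : ‖Q‖ ≤ b := by have := hκ.1; simp only [hbdef]; linarith
  have hb2 : b ≤ 2 * ‖Q‖ := by have := hκ.2; simp only [hbdef]; linarith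
  set α : ℝ := (qminus - 2) / 2 with hα
  set β : ℝ := (qplus - 2) / 2 with hβ
  set f : EuclideanSpace ℝ (Fin n) → ℝ := fun x => b ^ ((q x - 2) / 2) with hf
  have hmeas : Measurable f := by
    have hfe : f = fun x => Real.exp (Real.log b * ((q x - 2) / 2)) := by
      funext x; rw [hf]; exact Real.rpow_def_of_pos hb0 _
    rw [hfe]
    exact (measurable_const.mul ((hq.sub measurable_const).div measurable_const)).exp
  have hbound : ∀ᵐ x ∂(volume.restrict E), b ^ α ≤ f x ∧ f x ≤ b ^ β := by
    filter_upwards [hqae] with x hx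
    constructor
    · exact Real.rpow_le_rpow_of_exponent_le hb1 (by simp only [hα]; linarith [hx.1])
    · exact Real.rpow_le_rpow_of_exponent_le hb1 (by simp only [hβ]; linarith [hx.2])
  have hfin : volume.restrict E univ ≠ ⊤ := by
    rw [Measure.restrict_apply_univ]; exact hEtop.ne
  have hconstβ : Integrable (fun _ : EuclideanSpace ℝ (Fin n) => b ^ β) (volume.restrict E) :=
    integrable_const_iff.mpr (Or.inr ⟨lt_top_iff_ne_top.mpr hfin⟩)
  have hint : Integrable f (volume.restrict E) := by
    refine Integrable.mono' hconstβ hmeas.aestronglyMeasurable ?_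
    filter_upwards [hbound] with x hx
    rw [Real.norm_eq_abs, abs_of_pos (Real.rpow_pos_of_pos hb0 _)]
    exact hx.2
  have hconst : Integrable (fun _ : EuclideanSpace ℝ (Fin n) => b ^ α) (volume.restrict E) :=
    integrable_const_iff.mpr (Or.inr ⟨lt_top_iff_ne_top.mpr hfin⟩)
  have hintlow : b ^ α * (volume E).toReal ≤ ∫ x in E, f x := by
    have := integral_mono_ae hconst hint (hbound.mono fun x hx => hx.1)
    rwa [setIntegral_const, smul_eq_mul, mul_comm] at this
  have hvpos : 0 < (volume E).toReal := ENNReal.toReal_pos hE0.ne' hEtop.ne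
  have havg : b ^ α ≤ ⨍ x in E, f x := by
    rw [setAverage_eq, smul_eq_mul]
    rw [← mul_le_mul_iff_right₀ hvpos]
    calc (volume E).toReal * (b ^ α) = b ^ α * (volume E).toReal := by ring
    _ ≤ ∫ x in E, f x := hintlow
    _ = (volume E).toReal * ((volume E).toReal⁻¹ * ∫ x in E, f x) := by
        field_simp
  have hsmul : (⨍ x in E, ((κ + ‖Q‖) ^ ((q x - 2) / 2)) • Q) = (⨍ x in E, f x) • Q := by
    simp only [MeasureTheory.average, hf, hbdef]
    exact integral_smul_const _ _
  have hαpos : 0 < b ^ α := Real.rpow_pos_of_pos hb0 _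
  have havgpos : 0 < ⨍ x in E, f x := lt_of_lt_of_le hαpos havg
  have hnorm : ‖⨍ x in E, ((κ + ‖Q‖) ^ ((q x - 2) / 2)) • Q‖ = (⨍ x in E, f x) * ‖Q‖ := by
    rw [hsmul, norm_smul, Real.norm_eq_abs, abs_of_pos havgpos]
  -- lower bound on the square
  have hXlow : b ^ e * ‖Q‖ ^ (2:ℕ) ≤ ‖⨍ x in E, ((κ + ‖Q‖) ^ ((q x - 2) / 2)) • Q‖ ^ 2 := by
    rw [hnorm, mul_pow]
    have h1 : b ^ e = (b ^ α) ^ (2:ℕ) := by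
      rw [← Real.rpow_natCast (b ^ α) 2, ← Real.rpow_mul hb0.le]
      norm_num [hα, he]
    rw [h1]
    have := pow_le_pow_left₀ hαpos.le havg 2
    nlinarith [sq_nonneg ‖Q‖]
  -- b^e ≥ m * ‖Q‖^e
  have hbe : m * ‖Q‖ ^ e ≤ b ^ e := by
    rcases le_or_gt 0 e with hepos | heneg
    · calc m * ‖Q‖ ^ e ≤ 1 * ‖Q‖ ^ e := by
            have := Real.rpow_pos_of_pos hQ0 e
            nlinarith [min_le_left (1:ℝ) ((2:ℝ) ^ e)]
      _ = ‖Q‖ ^ e := one_mul _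
      _ ≤ b ^ e := Real.rpow_le_rpow hQ0.le hbQ hepos
    · calc m * ‖Q‖ ^ e ≤ (2:ℝ) ^ e * ‖Q‖ ^ e := by
            have := Real.rpow_pos_of_pos hQ0 e
            nlinarith [min_le_right (1:ℝ) ((2:ℝ) ^ e)]
      _ = (2 * ‖Q‖) ^ e := (Real.mul_rpow (by norm_num) hQ0.le).symm
      _ ≤ b ^ e := Real.rpow_le_rpow_of_nonpos hb0 hb2 heneg.le
  have hsplit : ‖Q‖ ^ qminus = ‖Q‖ ^ e * ‖Q‖ ^ (2:ℕ) := by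
    rw [← Real.rpow_natCast ‖Q‖ 2, ← Real.rpow_add hQ0]
    norm_num [he]
  have key : m * ‖Q‖ ^ qminus ≤ ‖⨍ x in E, ((κ + ‖Q‖) ^ ((q x - 2) / 2)) • Q‖ ^ 2 := by
    calc m * ‖Q‖ ^ qminus = (m * ‖Q‖ ^ e) * ‖Q‖ ^ (2:ℕ) := by rw [hsplit]; ring
    _ ≤ b ^ e * ‖Q‖ ^ (2:ℕ) := by
        apply mul_le_mul_of_nonneg_right hbe (by positivity)
    _ ≤ _ := hXlow
  have hcm : m⁻¹ ≤ max 1 m⁻¹ := le_max_right _ _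
  calc ‖Q‖ ^ qminus = m⁻¹ * (m * ‖Q‖ ^ qminus) := by field_simp
  _ ≤ m⁻¹ * ‖⨍ x in E, ((κ + ‖Q‖) ^ ((q x - 2) / 2)) • Q‖ ^ 2 := by
      apply mul_le_mul_of_nonneg_left key (by positivity)
  _ ≤ max 1 m⁻¹ * (‖⨍ x in E, ((κ + ‖Q‖) ^ ((q x - 2) / 2)) • Q‖ ^ 2 + 1) := by
      have : (0:ℝ) < m⁻¹ := by positivity
      nlinarith
end
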